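/- arXiv:2406.16667 — 4 statements merged into one kernel-verified Lean document; each statement's English description precedes it below -/
import Mathlib

section
/- Let f ∈ L¹[a,b] be integrable and g be a positive, decreasing real function on [a,b]. Then there exists ξ ∈ [a,b] such that ∫_a^b f(x)g(x) dx = g(a) ∫_a^ξ f(x) dx. -/
open MeasureTheory Set

theorem bonnet_second_mean_value (a b : ℝ) (hab : a < b) (f g : ℝ → ℝ)
    (hf : IntervalIntegrable f MeasureTheory.volume a b)
    (hg_pos : ∀ x ∈ Set.Icc a b, 0 < g x)
    (hg_anti : AntitoneOn g (Set.Icc a b)) :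
    ∃ ξ ∈ Set.Icc a b, ∫ x in a..b, f x * g x = g a * ∫ x in a..ξ, f x := by
  have hab' : a ≤ b := hab.le
  have hga_pos : 0 < g a := hg_pos a ⟨le_rfl, hab'⟩
  -- extend g to an antitone function on ℝ
  set G : ℝ → ℝ := fun x => g (max a (min b x)) with hGdef
  have hmem : ∀ x : ℝ, max a (min b x) ∈ Icc a b := fun x =>
    ⟨le_max_left _ _, max_le hab' (min_le_left _ _)⟩
  have hGanti : Antitone G := by
    intro x y hxy
    exact hg_anti (hmem x) (hmem y) (max_le_max le_rfl (min_le_min le_rfl hxy))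
  have hGeq : ∀ x ∈ Icc a b, G x = g x := by
    intro x hx
    simp [hGdef, min_eq_right hx.2, max_eq_right hx.1]
  have hGmeas : Measurable G := hGanti.measurable
  have hGle : ∀ x : ℝ, G x ≤ g a := fun x => hg_anti ⟨le_rfl, hab'⟩ (hmem x) (le_max_left _ _)
  have hGpos : ∀ x : ℝ, 0 < G x := fun x => hg_pos _ (hmem x)
  -- the primitive
  set F : ℝ → ℝ := fun u => ∫ x in a..u, f x with hFdef
  have hFcont : ContinuousOn F (Icc a b) := by
    have := intervalIntegral.continuousOn_primitive_interval' hf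
      (by rw [Set.uIcc_of_le hab']; exact ⟨le_rfl, hab'⟩)
    rwa [Set.uIcc_of_le hab'] at this
  -- measures
  set μ : Measure ℝ := volume.restrict (Ioc a b) with hμdef
  set ν : Measure ℝ := volume.restrict (Ioc 0 (g a)) with hνdef
  have hνfin : IsFiniteMeasure ν := by
    constructor
    rw [hνdef, Measure.restrict_apply_univ]
    exact measure_Ioc_lt_top
  have hfμ : Integrable f μ := hf.1
  -- the kernel function
  set H : ℝ × ℝ → ℝ :=
    fun p => f p.1 * ({q : ℝ × ℝ | q.2 < G q.1}.indicator (fun _ => (1:ℝ)) p) with hHdef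
  have hSmeas : MeasurableSet {q : ℝ × ℝ | q.2 < G q.1} :=
    measurableSet_lt measurable_snd (hGmeas.comp measurable_fst)
  have hfst : Integrable (fun p : ℝ × ℝ => f p.1) (μ.prod ν) := by
    have h1 : Integrable (fun _ : ℝ => (1:ℝ)) ν := integrable_const 1
    have := hfμ.mul_prod h1
    simpa using this
  have hindsm : AEStronglyMeasurable
      ({q : ℝ × ℝ | q.2 < G q.1}.indicator (fun _ => (1:ℝ))) (μ.prod ν) :=
    ((measurable_const.indicator hSmeas).stronglyMeasurable).aestronglyMeasurable
  have hHint : Integrable H (μ.prod ν) := by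
    refine (hfst.norm.mono' (hfst.aestronglyMeasurable.mul hindsm) ?_)
    filter_upwards with p
    rw [Real.norm_eq_abs, abs_mul]
    by_cases h : p ∈ {q : ℝ × ℝ | q.2 < G q.1} <;>
      simp [Set.indicator, h, abs_nonneg]
  -- left side: double integral equals ∫ f * g
  have hleft : ∫ p, H p ∂(μ.prod ν) = ∫ x in a..b, f x * g x := by
    rw [MeasureTheory.integral_prod _ hHint]
    rw [intervalIntegral.integral_of_le hab']
    apply setIntegral_congr_fun measurableSet_Ioc
    intro x hx
    have hind : ∀ t : ℝ, ({q : ℝ × ℝ | q.2 < G q.1}.indicator (fun _ => (1:ℝ)) (x, t))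
        = (Iio (G x)).indicator (fun _ => (1:ℝ)) t := by
      intro t
      by_cases h : t < G x <;> simp [Set.indicator, h]
    simp only [hHdef]
    calc ∫ t, f x * ({q : ℝ × ℝ | q.2 < G q.1}.indicator (fun _ => (1:ℝ)) (x, t)) ∂ν
        = f x * ∫ t, (Iio (G x)).indicator (fun _ => (1:ℝ)) t ∂ν := by
          rw [← integral_const_mul]
          exact integral_congr_ae (Filter.Eventually.of_forall fun t => by
            simp only []; rw [hind t])
      _ = f x * g x := by
          rw [hνdef, setIntegral_indicator measurableSet_Iio]
          have hseteq : Ioc 0 (g a) ∩ Iio (G x) = Ioo 0 (G x) := by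
            ext t
            constructor
            · rintro ⟨⟨h1, _⟩, h3⟩; exact ⟨h1, h3⟩
            · rintro ⟨h1, h2⟩; exact ⟨⟨h1, le_trans h2.le (hGle x)⟩, h2⟩
          rw [hseteq, setIntegral_const, smul_eq_mul, mul_one, Real.volume_real_Ioo_of_le (hGpos x).le, sub_zero,
            hGeq x (Ioc_subset_Icc_self hx)]
  -- swap
  have hswap : ∫ p, H p ∂(μ.prod ν) = ∫ t, (∫ x, H (x, t) ∂μ) ∂ν := by
    rw [MeasureTheory.integral_prod _ hHint]
    exact MeasureTheory.integral_integral_swap hHint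
  -- the slice function
  set J : ℝ → ℝ := fun t => ∫ x, H (x, t) ∂μ with hJdef
  have hJint : Integrable J ν := hHint.integral_prod_right
  -- each slice value lies in the image of F
  have hslice : ∀ t ∈ Ioc 0 (g a), ∃ c ∈ Icc a b, J t = F c := by
    intro t ht
    set S : Set ℝ := {x | x ∈ Ioc a b ∧ t < G x} with hSdef
    set c : ℝ := sSup (insert a S) with hcdef
    have hbdd : BddAbove (insert a S) := by
      refine ⟨b, ?_⟩
      rintro x (rfl | hx)
      · exact hab'
      · exact hx.1.2
    have hca : a ≤ c := le_csSup hbdd (mem_insert a S)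
    have hcb : c ≤ b := csSup_le (insert_nonempty a S) (by
      rintro x (rfl | hx)
      · exact hab'
      · exact hx.1.2)
    refine ⟨c, ⟨hca, hcb⟩, ?_⟩
    have hSsub : S ⊆ Ioc a c := fun x hx => ⟨hx.1.1, le_csSup hbdd (mem_insert_of_mem a hx)⟩
    have hsubS : Ioo a c ⊆ S := by
      rintro x ⟨hax, hxc⟩
      obtain ⟨y, hy, hxy⟩ := exists_lt_of_lt_csSup (insert_nonempty a S) hxc
      rcases hy with rfl | hy
      · exact absurd hxy (not_lt.mpr hax.le)
      · exact ⟨⟨hax, le_trans hxy.le hy.1.2⟩, lt_of_lt_of_le hy.2 (hGanti hxy.le)⟩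
    have hae : S =ᵐ[volume] Ioc a c := by
      rw [MeasureTheory.ae_eq_set]
      constructor
      · simp [Set.diff_eq_empty.mpr hSsub]
      · refine measure_mono_null (fun x hx => ?_) (measure_singleton c)
        rcases hx with ⟨hx1, hx2⟩
        rcases eq_or_lt_of_le hx1.2 with h | h
        · exact h
        · exact absurd (hsubS ⟨hx1.1, h⟩) hx2
    have hJeq : J t = ∫ x in Ioc a c, f x := by
      rw [hJdef]
      simp only [hHdef]
      have hind : ∀ x : ℝ, f x * ({q : ℝ × ℝ | q.2 < G q.1}.indicator (fun _ => (1:ℝ)) (x, t))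
          = ({x : ℝ | t < G x}).indicator f x := by
        intro x
        by_cases h : t < G x <;> simp [Set.indicator, h]
      calc ∫ x, f x * ({q : ℝ × ℝ | q.2 < G q.1}.indicator (fun _ => (1:ℝ)) (x, t)) ∂μ
          = ∫ x, ({x : ℝ | t < G x}).indicator f x ∂μ :=
            integral_congr_ae (Filter.Eventually.of_forall fun x => hind x)
        _ = ∫ x in Ioc a b ∩ {x : ℝ | t < G x}, f x :=
            setIntegral_indicator (hGmeas measurableSet_Ioi)
        _ = ∫ x in S, f x := rfl
        _ = ∫ x in Ioc a c, f x := setIntegral_congr_set hae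
    rw [hJeq, hFdef]
    simp only
    rw [intervalIntegral.integral_of_le hca]
  -- extrema of F on [a,b]
  obtain ⟨p, hp, hpmin⟩ := isCompact_Icc.exists_isMinOn (nonempty_Icc.mpr hab') hFcont
  obtain ⟨q, hq, hqmax⟩ := isCompact_Icc.exists_isMaxOn (nonempty_Icc.mpr hab') hFcont
  -- bounds on the slice integral
  have hJlb : ∀ t ∈ Ioc 0 (g a), F p ≤ J t := by
    intro t ht
    obtain ⟨c, hc, hcJ⟩ := hslice t ht
    rw [hcJ]; exact hpmin hc
  have hJub : ∀ t ∈ Ioc 0 (g a), J t ≤ F q := by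
    intro t ht
    obtain ⟨c, hc, hcJ⟩ := hslice t ht
    rw [hcJ]; exact hqmax hc
  have hνint : ∫ t, J t ∂ν = ∫ t in Ioc 0 (g a), J t := by rw [hνdef]
  have hJion : IntegrableOn J (Ioc 0 (g a)) volume := hJint
  have hlb : F p * g a ≤ ∫ t, J t ∂ν := by
    rw [hνint]
    have h1 : IntegrableOn (fun _ : ℝ => F p) (Ioc 0 (g a)) volume :=
      integrableOn_const measure_Ioc_lt_top.ne
    have := MeasureTheory.setIntegral_mono_on h1 hJion measurableSet_Ioc hJlb
    rwa [setIntegral_const, smul_eq_mul, Real.volume_real_Ioc_of_le hga_pos.le, sub_zero,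
      mul_comm] at this
  have hub : ∫ t, J t ∂ν ≤ F q * g a := by
    rw [hνint]
    have h1 : IntegrableOn (fun _ : ℝ => F q) (Ioc 0 (g a)) volume :=
      integrableOn_const measure_Ioc_lt_top.ne
    have := MeasureTheory.setIntegral_mono_on hJion h1 measurableSet_Ioc hJub
    rwa [setIntegral_const, smul_eq_mul, Real.volume_real_Ioc_of_le hga_pos.le, sub_zero,
      mul_comm] at this
  -- combine
  have hkey : ∫ x in a..b, f x * g x = ∫ t, J t ∂ν := by
    rw [← hleft, hswap]
  set v : ℝ := (∫ x in a..b, f x * g x) / g a with hvdef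
  have hvlb : F p ≤ v := by
    rw [hvdef, le_div_iff₀ hga_pos, hkey]; exact hlb
  have hvub : v ≤ F q := by
    rw [hvdef, div_le_iff₀ hga_pos, hkey]; exact hub
  have hsub : Set.uIcc p q ⊆ Icc a b := Set.uIcc_subset_Icc hp hq
  obtain ⟨ξ, hξ, hξv⟩ := intermediate_value_uIcc (hFcont.mono hsub) (Set.Icc_subset_uIcc ⟨hvlb, hvub⟩)
  refine ⟨ξ, hsub hξ, ?_⟩
  show _ = g a * F ξ
  rw [hξv, hvdef, mul_comm, div_mul_cancel₀ _ hga_pos.ne']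
end

section
/- Let f and g be continuous real functions on [a,b], with f having a non-vanishing continuous derivative f', and suppose g(x)/f'(x) is positive and monotonic on [a,b]. Then |∫_a^b g(x) e^{i f(x)} dx| ≤ 2 · max_{a≤x≤b} g(x)/f'(x). -/
open MeasureTheory Set intervalIntegral

lemma fdt_core (A B : ℝ) (hAB : A ≤ B) (u : ℝ → ℝ) (hu_cont : Continuous u)
    (hu_mono : Monotone u) (hu0 : 0 ≤ u A) (h : ℝ → ℂ) (hh : Continuous h)
    (S : ℝ) (hS : ∀ c ∈ Icc A B, ‖∫ t in c..B, h t‖ ≤ S) :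
    ‖∫ x in A..B, (u x : ℂ) * h x‖ ≤ S * u B := by
  set C := u A with hCdef
  set D := u B with hDdef
  have hCD : C ≤ D := hu_mono hAB
  have hS0 : 0 ≤ S := le_trans (by simp) (hS B ⟨hAB, le_refl B⟩)
  obtain ⟨M, hM⟩ : ∃ M, ∀ x ∈ Icc A B, ‖h x‖ ≤ M :=
    IsCompact.exists_bound_of_continuousOn isCompact_Icc hh.continuousOn
  -- layer cake representation
  have key : ∀ x ∈ Icc A B, ((u x - C : ℝ) : ℂ) * h x
      = ∫ s in Ioc C D, (if s ≤ u x then h x else 0) := by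
    intro x hx
    have h1 : C ≤ u x := hu_mono hx.1
    have h2 : u x ≤ D := hu_mono hx.2
    have he : (fun s => if s ≤ u x then h x else 0)
        = Set.indicator (Iic (u x)) (fun _ => h x) := by
      ext s; simp [Set.indicator_apply, Set.mem_Iic]
    rw [he, setIntegral_indicator measurableSet_Iic]
    have he2 : Ioc C D ∩ Iic (u x) = Ioc C (u x) := by
      ext s; simp only [mem_inter_iff, mem_Ioc, mem_Iic]
      constructor
      · rintro ⟨⟨hs1, _⟩, hs2⟩; exact ⟨hs1, hs2⟩
      · rintro ⟨hs1, hs2⟩; exact ⟨⟨hs1, hs2.trans h2⟩, hs2⟩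
    rw [he2, setIntegral_const, Real.volume_real_Ioc_of_le h1]
    simp [Complex.ofReal_sub, smul_eq_mul]
  -- integrability on the product
  have hInt : Integrable (Function.uncurry (fun x s => if s ≤ u x then h x else 0))
      ((volume.restrict (Ioc A B)).prod (volume.restrict (Ioc C D))) := by
    have hT : IsClosed {p : ℝ × ℝ | p.2 ≤ u p.1} :=
      isClosed_le continuous_snd (hu_cont.comp continuous_fst)
    have hsm : StronglyMeasurable (Function.uncurry (fun x s => if s ≤ u x then h x else 0)) := by
      have he : Function.uncurry (fun x s => if s ≤ u x then h x else 0)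
          = Set.indicator {p : ℝ × ℝ | p.2 ≤ u p.1} (fun p => h p.1) := by
        ext p; simp [Function.uncurry, Set.indicator_apply]
      rw [he]
      exact ((hh.comp continuous_fst).stronglyMeasurable).indicator hT.measurableSet
    refine ⟨hsm.aestronglyMeasurable, ?_⟩
    apply HasFiniteIntegral.of_bounded (C := max M 0)
    have hae : ∀ᵐ p ∂((volume.restrict (Ioc A B)).prod (volume.restrict (Ioc C D))),
        p ∈ Ioc A B ×ˢ Ioc C D := by
      rw [Measure.prod_restrict]
      exact ae_restrict_mem (measurableSet_Ioc.prod measurableSet_Ioc)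
    filter_upwards [hae] with p hp
    by_cases hc : p.2 ≤ u p.1
    · simp only [Function.uncurry, hc, if_true]
      exact le_max_of_le_left (hM p.1 (Ioc_subset_Icc_self hp.1))
    · simp [Function.uncurry, hc]
  -- inner integral evaluation
  have inner : ∀ s ∈ Ioc C D,
      ∃ c ∈ Icc A B, (∫ x in Ioc A B, if s ≤ u x then h x else 0) = ∫ t in c..B, h t := by
    intro s hs
    set T : Set ℝ := Icc A B ∩ u ⁻¹' (Ici s) with hTdef
    have hTcl : IsClosed T := isClosed_Icc.inter (isClosed_Ici.preimage hu_cont)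
    have hTne : T.Nonempty := ⟨B, ⟨⟨hAB, le_refl B⟩, hs.2⟩⟩
    have hTbd : BddBelow T := ⟨A, fun x hx => hx.1.1⟩
    set c := sInf T with hcdef
    have hcT : c ∈ T := hTcl.csInf_mem hTne hTbd
    have hAc : A < c := by
      rcases lt_or_eq_of_le hcT.1.1 with h' | h'
      · exact h'
      · exact absurd (h' ▸ hcT.2 : s ≤ u A) (not_le.mpr hs.1)
    refine ⟨c, hcT.1, ?_⟩
    have heq : (fun x => if s ≤ u x then h x else 0)
        = Set.indicator {x | s ≤ u x} h := by
      ext x; simp [Set.indicator_apply, Set.mem_setOf_eq]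
    rw [heq, setIntegral_indicator ((isClosed_le continuous_const hu_cont).measurableSet)]
    have hset : Ioc A B ∩ {x | s ≤ u x} = Icc c B := by
      ext x
      simp only [mem_inter_iff, mem_setOf_eq, mem_Ioc, mem_Icc]
      constructor
      · rintro ⟨⟨hx1, hx2⟩, hux⟩
        exact ⟨csInf_le hTbd ⟨⟨le_of_lt hx1, hx2⟩, hux⟩, hx2⟩
      · rintro ⟨hx1, hx2⟩
        exact ⟨⟨lt_of_lt_of_le hAc hx1, hx2⟩, le_trans hcT.2 (hu_mono hx1)⟩
    rw [hset, integral_Icc_eq_integral_Ioc, intervalIntegral.integral_of_le hcT.1.2]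
  -- split the integral
  have int1 : IntervalIntegrable (fun x => (C : ℂ) * h x) volume A B :=
    (continuous_const.mul hh).intervalIntegrable A B
  have int2 : IntervalIntegrable (fun x => ((u x - C : ℝ) : ℂ) * h x) volume A B := by
    apply Continuous.intervalIntegrable
    exact (Complex.continuous_ofReal.comp (hu_cont.sub continuous_const)).mul hh
  have hsplit : (∫ x in A..B, (u x : ℂ) * h x)
      = (C : ℂ) * (∫ x in A..B, h x) + ∫ x in A..B, ((u x - C : ℝ) : ℂ) * h x := by
    rw [← intervalIntegral.integral_const_mul, ← intervalIntegral.integral_add int1 int2]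
    apply intervalIntegral.integral_congr
    intro x _
    push_cast; ring
  -- bound the second term
  have hsecond : ‖∫ x in A..B, ((u x - C : ℝ) : ℂ) * h x‖ ≤ S * (D - C) := by
    rw [intervalIntegral.integral_of_le hAB]
    rw [setIntegral_congr_fun measurableSet_Ioc
      (fun x hx => key x (Ioc_subset_Icc_self hx))]
    rw [integral_integral_swap hInt]
    have hb : ∀ s ∈ Ioc C D, ‖∫ x in Ioc A B, if s ≤ u x then h x else 0‖ ≤ S := by
      intro s hs
      obtain ⟨c, hc, hceq⟩ := inner s hs
      rw [hceq]; exact hS c hc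
    calc ‖∫ s in Ioc C D, ∫ x in Ioc A B, if s ≤ u x then h x else 0‖
        ≤ S * (volume (Ioc C D)).toReal := by
          exact norm_setIntegral_le_of_norm_le_const (by simp [Real.volume_Ioc]) hb
      _ = S * (D - C) := by rw [Real.volume_Ioc, ENNReal.toReal_ofReal (by linarith)]
  -- combine
  have hfirst : ‖(C : ℂ) * (∫ x in A..B, h x)‖ ≤ C * S := by
    rw [norm_mul, Complex.norm_real, Real.norm_eq_abs, abs_of_nonneg hu0]
    exact mul_le_mul_of_nonneg_left (hS A ⟨le_refl A, hAB⟩) hu0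
  calc ‖∫ x in A..B, (u x : ℂ) * h x‖
      ≤ C * S + S * (D - C) := by
        rw [hsplit]; exact le_trans (norm_add_le _ _) (add_le_add hfirst hsecond)
    _ = S * D := by ring

theorem first_derivative_test (a b : ℝ) (hab : a < b) (f f' g : ℝ → ℝ)
    (hg : ContinuousOn g (Set.Icc a b))
    (hf' : ContinuousOn f' (Set.Icc a b))
    (hderiv : ∀ x ∈ Set.Icc a b, HasDerivAt f (f' x) x)
    (hne : ∀ x ∈ Set.Icc a b, f' x ≠ 0)
    (hpos : ∀ x ∈ Set.Icc a b, 0 < g x / f' x)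
    (hmono : MonotoneOn (fun x => g x / f' x) (Set.Icc a b) ∨
      AntitoneOn (fun x => g x / f' x) (Set.Icc a b)) :
    ‖∫ x in a..b, (g x : ℂ) * Complex.exp (Complex.I * (f x : ℂ))‖ ≤
      2 * sSup ((fun x => g x / f' x) '' Set.Icc a b) := by
  have hab' : a ≤ b := hab.le
  set clamp : ℝ → ℝ := fun x => max a (min b x) with hclamp
  have hclamp_mem : ∀ x, clamp x ∈ Icc a b :=
    fun x => ⟨le_max_left _ _, max_le hab' (min_le_left _ _)⟩
  have hclamp_id : ∀ x ∈ Icc a b, clamp x = x := by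
    intro x hx
    simp only [hclamp]
    rw [min_eq_right hx.2, max_eq_right hx.1]
  have hclamp_cont : Continuous clamp :=
    continuous_const.max (continuous_const.min continuous_id)
  have hclamp_mono : Monotone clamp :=
    fun x y hxy => max_le_max (le_refl a) (min_le_min (le_refl b) hxy)
  set u0 : ℝ → ℝ := fun x => g x / f' x with hu0def
  have hu0cont : ContinuousOn u0 (Icc a b) := hg.div hf' hne
  have hfc : ContinuousOn f (Icc a b) :=
    fun x hx => ((hderiv x hx).continuousAt).continuousWithinAt
  set U : ℝ → ℝ := fun x => u0 (clamp x) with hUdef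
  set H : ℝ → ℂ := fun x =>
    (f' (clamp x) : ℂ) * Complex.exp (Complex.I * (f (clamp x) : ℂ)) with hHdef
  have hUcont : Continuous U :=
    hu0cont.comp_continuous hclamp_cont hclamp_mem
  have hHcont : Continuous H := by
    apply Continuous.mul
    · exact Complex.continuous_ofReal.comp (hf'.comp_continuous hclamp_cont hclamp_mem)
    · exact Complex.continuous_exp.comp (continuous_const.mul
        (Complex.continuous_ofReal.comp (hfc.comp_continuous hclamp_cont hclamp_mem)))
  -- the integrand agrees with U * H on [a, b]
  have hinteq : (∫ x in a..b, (g x : ℂ) * Complex.exp (Complex.I * (f x : ℂ)))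
      = ∫ x in a..b, (U x : ℂ) * H x := by
    apply intervalIntegral.integral_congr
    intro x hx
    rw [uIcc_of_le hab'] at hx
    simp only [hUdef, hHdef, hclamp_id x hx, hu0def]
    rw [← mul_assoc]
    congr 1
    rw [← Complex.ofReal_mul, div_mul_cancel₀ _ (hne x hx)]
  -- FTC bound
  have hFTC : ∀ c ∈ Icc a b, ∀ d ∈ Icc a b, ‖∫ t in c..d, H t‖ ≤ 2 := by
    intro c hc d hd
    have huIcc : uIcc c d ⊆ Icc a b := uIcc_subset_Icc hc hd
    have heq : (∫ t in c..d, H t)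
        = ∫ t in c..d, (f' t : ℂ) * Complex.exp (Complex.I * (f t : ℂ)) := by
      apply intervalIntegral.integral_congr
      intro x hx
      simp only [hHdef, hclamp_id x (huIcc hx)]
    rw [heq]
    have hder : ∀ t ∈ uIcc c d,
        HasDerivAt (fun x => -Complex.I * Complex.exp (Complex.I * (f x : ℂ)))
          ((f' t : ℂ) * Complex.exp (Complex.I * (f t : ℂ))) t := by
      intro t ht
      have h1 : HasDerivAt (fun x => ((f x : ℝ) : ℂ)) ((f' t : ℝ) : ℂ) t :=
        (hderiv t (huIcc ht)).ofReal_comp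
      have h2 := (h1.const_mul Complex.I).cexp
      have h3 := h2.const_mul (-Complex.I)
      refine h3.congr_deriv ?_
      have : Complex.I * Complex.I = -1 := Complex.I_mul_I
      ring_nf
      rw [Complex.I_sq]
      ring
    have hint : IntervalIntegrable
        (fun t => (f' t : ℂ) * Complex.exp (Complex.I * (f t : ℂ))) volume c d := by
      apply ContinuousOn.intervalIntegrable
      apply ContinuousOn.mul
      · exact (Complex.continuous_ofReal.comp_continuousOn (hf'.mono huIcc))
      · exact Complex.continuous_exp.comp_continuousOn
          (continuousOn_const.mul (Complex.continuous_ofReal.comp_continuousOn (hfc.mono huIcc)))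
    rw [intervalIntegral.integral_eq_sub_of_hasDerivAt hder hint]
    have hn : ∀ r : ℝ, ‖-Complex.I * Complex.exp (Complex.I * (r : ℂ))‖ = 1 := by
      intro r
      rw [norm_mul, norm_neg, Complex.norm_I, one_mul, mul_comm,
        Complex.norm_exp_ofReal_mul_I]
    calc ‖-Complex.I * Complex.exp (Complex.I * (f d : ℂ))
          - -Complex.I * Complex.exp (Complex.I * (f c : ℂ))‖
        ≤ ‖-Complex.I * Complex.exp (Complex.I * (f d : ℂ))‖
          + ‖-Complex.I * Complex.exp (Complex.I * (f c : ℂ))‖ := norm_sub_le _ _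
      _ ≤ 2 := by rw [hn, hn]; norm_num
  have hbdd : BddAbove (u0 '' Icc a b) :=
    IsCompact.bddAbove_image isCompact_Icc hu0cont
  rw [hinteq]
  rcases hmono with hm | hm
  · -- monotone case
    have hUmono : Monotone U :=
      fun x y hxy => hm (hclamp_mem x) (hclamp_mem y) (hclamp_mono hxy)
    have hU0 : 0 ≤ U a := by
      have := hpos a ⟨le_refl a, hab'⟩
      simp only [hUdef, hclamp_id a ⟨le_refl a, hab'⟩]
      exact this.le
    have hcore := fdt_core a b hab' U hUcont hUmono hU0 H hHcont 2
      (fun c hc => hFTC c hc b ⟨hab', le_refl b⟩)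
    have hUb : U b ≤ sSup (u0 '' Icc a b) := by
      simp only [hUdef, hclamp_id b ⟨hab', le_refl b⟩]
      exact le_csSup hbdd ⟨b, ⟨hab', le_refl b⟩, rfl⟩
    calc ‖∫ x in a..b, (U x : ℂ) * H x‖ ≤ 2 * U b := hcore
      _ ≤ 2 * sSup (u0 '' Icc a b) := by linarith
  · -- antitone case: reflect
    set V : ℝ → ℝ := fun x => U (a + b - x) with hVdef
    set Hc : ℝ → ℂ := fun x => H (a + b - x) with hHcdef
    have hrefl_mem : ∀ x ∈ Icc a b, a + b - x ∈ Icc a b := by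
      intro x hx; constructor <;> [linarith [hx.2]; linarith [hx.1]]
    have hieq : (∫ x in a..b, (U x : ℂ) * H x) = ∫ x in a..b, (V x : ℂ) * Hc x := by
      have := intervalIntegral.integral_comp_sub_left
        (a := a) (b := b) (fun y => (U y : ℂ) * H y) (a + b)
      simp only [add_sub_cancel_right, add_sub_cancel_left] at this
      exact this.symm
    rw [hieq]
    have hVmono : Monotone V := by
      intro x y hxy
      exact hm (hclamp_mem _) (hclamp_mem _) (hclamp_mono (by linarith))
    have hVcont : Continuous V :=
      hUcont.comp (continuous_const.sub continuous_id)
    have hHccont : Continuous Hc :=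
      hHcont.comp (continuous_const.sub continuous_id)
    have hV0 : 0 ≤ V a := by
      have hb' : b ∈ Icc a b := ⟨hab', le_refl b⟩
      have := hpos b hb'
      simp only [hVdef, hUdef, add_sub_cancel_left, hclamp_id b hb']
      exact this.le
    have hS' : ∀ c ∈ Icc a b, ‖∫ t in c..b, Hc t‖ ≤ 2 := by
      intro c hc
      have heq2 : (∫ t in c..b, Hc t) = ∫ t in a..(a + b - c), H t := by
        have := intervalIntegral.integral_comp_sub_left (a := c) (b := b) H (a + b)
        simp only [add_sub_cancel_right] at this
        exact this
      rw [heq2]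
      exact hFTC a ⟨le_refl a, hab'⟩ (a + b - c) (hrefl_mem c hc)
    have hcore := fdt_core a b hab' V hVcont hVmono hV0 Hc hHccont 2 hS'
    have hVb : V b ≤ sSup (u0 '' Icc a b) := by
      have ha' : a ∈ Icc a b := ⟨le_refl a, hab'⟩
      simp only [hVdef, hUdef, add_sub_cancel_right, hclamp_id a ha']
      exact le_csSup hbdd ⟨a, ha', rfl⟩
    calc ‖∫ x in a..b, (V x : ℂ) * Hc x‖ ≤ 2 * V b := hcore
      _ ≤ 2 * sSup (u0 '' Icc a b) := by linarith
end

section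
/- Let f : [a,b] → ℝ have a continuous derivative with 0 < f'(x) on [a,b] and let ν ≥ 1 be an integer. Then |∫_a^b f'(x) e^{2πi(f(x)+νx)} dx| ≤ f'(a)/(π(f'(a)+ν)), provided f' is decreasing. -/
open MeasureTheory Set intervalIntegral

/-- Abel-summation / second-mean-value type bound: if `w` is continuous, antitone and
nonnegative on `[a,b]`, `F` has derivative `G` with `F a = 0` and `‖F‖ ≤ M` on `[a,b]`,
then `‖∫ w • G‖ ≤ M * w a`. -/
lemma abel_bound (a b : ℝ) (hab : a ≤ b) (w : ℝ → ℝ) (M : ℝ)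
    (hw_cont : ContinuousOn w (Set.Icc a b)) (hw_anti : AntitoneOn w (Set.Icc a b))
    (hw_nonneg : 0 ≤ w b)
    (F G : ℝ → ℂ) (hF : ∀ x ∈ Set.Icc a b, HasDerivAt F (G x) x)
    (hG : ContinuousOn G (Set.Icc a b)) (hFa : F a = 0)
    (hM : ∀ x ∈ Set.Icc a b, ‖F x‖ ≤ M) :
    ‖∫ x in a..b, w x • G x‖ ≤ M * w a := by
  have ha : a ∈ Set.Icc a b := ⟨le_refl a, hab⟩
  have hb : b ∈ Set.Icc a b := ⟨hab, le_refl b⟩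
  have hM0 : 0 ≤ M := le_trans (norm_nonneg _) (hM a ha)
  -- the globalized version of w
  set v : ℝ → ℝ := fun x => w (min b (max a x)) with hv_def
  have hclamp : ∀ x, min b (max a x) ∈ Set.Icc a b := fun x =>
    ⟨le_min hab (le_max_left a x), min_le_left _ _⟩
  have hv_eq : ∀ x ∈ Set.Icc a b, v x = w x := by
    intro x hx
    simp only [hv_def, max_eq_right hx.1, min_eq_right hx.2]
  have hv_anti : Antitone v := by
    intro x y hxy
    exact hw_anti (hclamp x) (hclamp y) (min_le_min le_rfl (max_le_max le_rfl hxy))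
  have hv_cont : Continuous v := by
    apply hw_cont.comp_continuous
      (continuous_const.min (continuous_const.max continuous_id)) hclamp
  -- the Stieltjes measure of -v
  set S : StieltjesFunction ℝ :=
    ⟨fun x => -(v x), fun x y hxy => neg_le_neg (hv_anti hxy),
      fun x => (hv_cont.neg.continuousWithinAt)⟩ with hS_def
  set μ : Measure ℝ := S.measure with hμ_def
  set ρ : Measure ℝ := μ.restrict (Set.Ioc a b) with hρ_def
  have hμIoc : ∀ x y : ℝ, μ (Set.Ioc x y) = ENNReal.ofReal (v x - v y) := by
    intro x y
    rw [hμ_def, StieltjesFunction.measure_Ioc]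
    congr 1
    show -(v y) - -(v x) = v x - v y
    ring
  have hρfin : IsFiniteMeasure ρ := by
    constructor
    rw [hρ_def, Measure.restrict_apply_univ, hμIoc]
    exact ENNReal.ofReal_lt_top
  have hρ_Ioi : ∀ x ∈ Set.Icc a b, ρ (Set.Ioi x) = ENNReal.ofReal (w x - w b) := by
    intro x hx
    rw [hρ_def, Measure.restrict_apply measurableSet_Ioi]
    have : Set.Ioi x ∩ Set.Ioc a b = Set.Ioc x b := by
      ext t
      simp only [Set.mem_inter_iff, Set.mem_Ioi, Set.mem_Ioc]
      constructor
      · rintro ⟨h1, _, h3⟩; exact ⟨h1, h3⟩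
      · rintro ⟨h1, h2⟩; exact ⟨h1, lt_of_le_of_lt hx.1 h1, h2⟩
    rw [this, hμIoc, hv_eq x hx, hv_eq b hb]
  have hwx_wb : ∀ x ∈ Set.Icc a b, 0 ≤ w x - w b := fun x hx =>
    sub_nonneg.2 (hw_anti hx hb hx.2)
  have key : ∀ x ∈ Set.Icc a b, w x = w b + (ρ (Set.Ioi x)).toReal := by
    intro x hx
    rw [hρ_Ioi x hx, ENNReal.toReal_ofReal (hwx_wb x hx)]
    ring
  -- total mass
  have hρ_univ : (ρ Set.univ).toReal = w a - w b := by
    rw [hρ_def, Measure.restrict_apply_univ, hμIoc, hv_eq a ha, hv_eq b hb,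
      ENNReal.toReal_ofReal (hwx_wb a ha)]
  -- bound for G
  obtain ⟨C, hC⟩ := IsCompact.exists_bound_of_continuousOn isCompact_Icc hG
  -- basic integrability
  have hGint : IntegrableOn G (Set.Ioc a b) volume :=
    (hG.integrableOn_Icc).mono_set Set.Ioc_subset_Icc_self
  have hvol_fin : IsFiniteMeasure (volume.restrict (Set.Ioc a b)) := by
    constructor
    rw [Measure.restrict_apply_univ, Real.volume_Ioc]
    exact ENNReal.ofReal_lt_top
  -- FTC: ∫ a..t G = F t for t ∈ [a,b]
  have hFt : ∀ t ∈ Set.Icc a b, (∫ x in Set.Ioc a t, G x) = F t := by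
    intro t ht
    have hIcc : Set.Icc a t ⊆ Set.Icc a b := Set.Icc_subset_Icc le_rfl ht.2
    have : (∫ x in a..t, G x) = F t - F a := by
      apply intervalIntegral.integral_eq_sub_of_hasDerivAt
      · intro x hx
        rw [Set.uIcc_of_le ht.1] at hx
        exact hF x (hIcc hx)
      · apply ContinuousOn.intervalIntegrable
        rw [Set.uIcc_of_le ht.1]
        exact hG.mono hIcc
    rw [intervalIntegral.integral_of_le ht.1] at this
    rw [this, hFa, sub_zero]
  -- the antitone function x ↦ (ρ (Ioi x)).toReal
  set r : ℝ → ℝ := fun x => (ρ (Set.Ioi x)).toReal with hr_def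
  have hr_anti : Antitone r := by
    intro x y hxy
    apply ENNReal.toReal_mono (measure_ne_top ρ _)
    exact measure_mono (Set.Ioi_subset_Ioi hxy)
  have hr_meas : Measurable r := hr_anti.measurable
  have hr_nonneg : ∀ x, 0 ≤ r x := fun x => ENNReal.toReal_nonneg
  have hr_bdd : ∀ x, r x ≤ (ρ Set.univ).toReal := fun x =>
    ENNReal.toReal_mono (measure_ne_top ρ _) (measure_mono (Set.subset_univ _))
  -- integrability of r • G on Ioc a b
  have hrG_int : IntegrableOn (fun x => r x • G x) (Set.Ioc a b) volume := by
    apply Integrable.smul_of_top_right (φ := r) hGint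
    apply memLp_top_of_bound (hr_meas.aestronglyMeasurable.restrict) ((ρ Set.univ).toReal)
    filter_upwards with x
    rw [Real.norm_eq_abs, abs_of_nonneg (hr_nonneg x)]
    exact hr_bdd x
  -- main decomposition
  have hsplit : (∫ x in a..b, w x • G x)
      = (w b) • (∫ x in Set.Ioc a b, G x) + ∫ x in Set.Ioc a b, r x • G x := by
    rw [intervalIntegral.integral_of_le hab]
    have hGint' : Integrable (fun x => w b • G x) (volume.restrict (Set.Ioc a b)) :=
      hGint.smul (w b)
    have step : (∫ x in Set.Ioc a b, w x • G x)
        = ∫ x in Set.Ioc a b, (w b • G x + r x • G x) := by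
      apply setIntegral_congr_fun measurableSet_Ioc
      intro x hx
      have hx' : x ∈ Set.Icc a b := Set.Ioc_subset_Icc_self hx
      show w x • G x = w b • G x + r x • G x
      rw [← add_smul, ← key x hx']
    rw [step, MeasureTheory.integral_add hGint' hrG_int, MeasureTheory.integral_smul]
  -- Fubini step: ∫ r • G = ∫ t ∂ρ, F t
  have hfub : (∫ x in Set.Ioc a b, r x • G x) = ∫ t, F t ∂ρ := by
    have h1 : ∀ x, r x • G x = ∫ t, (Set.Ioi x).indicator (fun _ => G x) t ∂ρ := by
      intro x
      rw [integral_indicator_const (G x) measurableSet_Ioi]; rfl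
    calc (∫ x in Set.Ioc a b, r x • G x)
        = ∫ x in Set.Ioc a b, ∫ t, (Set.Ioi x).indicator (fun _ => G x) t ∂ρ := by
          exact setIntegral_congr_fun measurableSet_Ioc fun x _ => h1 x
      _ = ∫ t, (∫ x in Set.Ioc a b, (Set.Ioi x).indicator (fun _ => G x) t) ∂ρ := by
          apply integral_integral_swap
          -- integrability of the uncurried function
          have hmeas_set : MeasurableSet {p : ℝ × ℝ | p.1 < p.2} :=
            measurableSet_lt measurable_fst measurable_snd
          have huncurry : (Function.uncurry fun x t => (Set.Ioi x).indicator (fun _ => G x) t)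
              = {p : ℝ × ℝ | p.1 < p.2}.indicator (fun p => G p.1) := by
            ext p
            simp only [Function.uncurry, Set.indicator_apply, Set.mem_Ioi, Set.mem_setOf_eq]
          rw [huncurry]
          have hGsm : AEStronglyMeasurable G (volume.restrict (Set.Ioc a b)) :=
            (hG.mono Set.Ioc_subset_Icc_self).aestronglyMeasurable measurableSet_Ioc
          constructor
          · exact (hGsm.comp_fst).indicator hmeas_set
          · apply HasFiniteIntegral.of_bounded (C := max C 0)
            have hprod : (volume.restrict (Set.Ioc a b)).prod ρ
                = (volume.prod μ).restrict ((Set.Ioc a b) ×ˢ (Set.Ioc a b)) := by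
              rw [hρ_def, Measure.prod_restrict]
            rw [hprod]
            filter_upwards [ae_restrict_mem (measurableSet_Ioc.prod measurableSet_Ioc)]
              with p hp
            rcases le_or_gt (‖({p : ℝ × ℝ | p.1 < p.2}.indicator (fun p => G p.1) p)‖) 0 with h | h
            · exact le_trans h (le_max_right _ _)
            · have : {p : ℝ × ℝ | p.1 < p.2}.indicator (fun p => G p.1) p = G p.1 ∨
                  {p : ℝ × ℝ | p.1 < p.2}.indicator (fun p => G p.1) p = 0 := by
                by_cases hmem : p ∈ {p : ℝ × ℝ | p.1 < p.2}
                · left; exact Set.indicator_of_mem hmem _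
                · right; exact Set.indicator_of_notMem hmem _
              rcases this with heq | heq
              · rw [heq]
                exact le_max_of_le_left (hC p.1 (Set.Ioc_subset_Icc_self hp.1))
              · rw [heq, norm_zero]; exact le_max_right _ _
      _ = ∫ t, F t ∂ρ := by
          apply MeasureTheory.integral_congr_ae
          filter_upwards [ae_restrict_mem measurableSet_Ioc] with t ht
          have h2 : ∀ x : ℝ, (Set.Ioi x).indicator (fun _ => G x) t
              = (Set.Iio t).indicator G x := by
            intro x
            simp only [Set.indicator_apply, Set.mem_Ioi, Set.mem_Iio]
          simp only [h2]
          rw [MeasureTheory.integral_indicator measurableSet_Iio, Measure.restrict_restrict measurableSet_Iio]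
          have : Set.Iio t ∩ Set.Ioc a b = Set.Ioo a t := by
            ext x
            simp only [Set.mem_inter_iff, Set.mem_Iio, Set.mem_Ioc, Set.mem_Ioo]
            constructor
            · rintro ⟨h1', h2', _⟩; exact ⟨h2', h1'⟩
            · rintro ⟨h1', h2'⟩; exact ⟨h2', h1', le_trans h2'.le ht.2⟩
          rw [this, ← integral_Ioc_eq_integral_Ioo]
          exact hFt t (Set.Ioc_subset_Icc_self ht)
  -- final estimate
  rw [hsplit, hfub]
  have h1 : ‖(w b) • (∫ x in Set.Ioc a b, G x)‖ ≤ w b * M := by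
    rw [norm_smul, Real.norm_eq_abs, abs_of_nonneg hw_nonneg]
    apply mul_le_mul_of_nonneg_left _ hw_nonneg
    rw [hFt b hb]
    exact hM b hb
  have h2 : ‖∫ t, F t ∂ρ‖ ≤ M * (w a - w b) := by
    rw [← hρ_univ]
    apply MeasureTheory.norm_integral_le_of_norm_le_const
    filter_upwards [ae_restrict_mem measurableSet_Ioc] with t ht
    exact hM t (Set.Ioc_subset_Icc_self ht)
  calc ‖(w b) • (∫ x in Set.Ioc a b, G x) + ∫ t, F t ∂ρ‖
      ≤ ‖(w b) • (∫ x in Set.Ioc a b, G x)‖ + ‖∫ t, F t ∂ρ‖ := norm_add_le _ _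
    _ ≤ w b * M + M * (w a - w b) := add_le_add h1 h2
    _ = M * w a := by ring

theorem weighted_exponential_integral_plus (a b : ℝ) (hab : a < b) (f f' : ℝ → ℝ)
    (hderiv : ∀ x ∈ Set.Icc a b, HasDerivAt f (f' x) x)
    (hcont : ContinuousOn f' (Set.Icc a b))
    (hpos : ∀ x ∈ Set.Icc a b, 0 < f' x)
    (hanti : AntitoneOn f' (Set.Icc a b))
    (ν : ℕ) (hν : 1 ≤ ν) :
    ‖∫ x in a..b, (f' x : ℂ) *
        Complex.exp (2 * Real.pi * Complex.I * ((f x + ν * x : ℝ) : ℂ))‖ ≤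
      f' a / (Real.pi * (f' a + ν)) := by
  have ha : a ∈ Set.Icc a b := ⟨le_refl a, hab.le⟩
  have hb : b ∈ Set.Icc a b := ⟨hab.le, le_refl b⟩
  have hπ : (0:ℝ) < Real.pi := Real.pi_pos
  have hν0 : (0:ℝ) ≤ (ν:ℝ) := Nat.cast_nonneg ν
  have hden : ∀ x ∈ Set.Icc a b, (0:ℝ) < 2 * Real.pi * (f' x + ν) := by
    intro x hx
    have := hpos x hx
    positivity
  -- the weight and phase
  set w : ℝ → ℝ := fun x => f' x / (2 * Real.pi * (f' x + ν)) with hw_def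
  set E : ℝ → ℂ := fun x => Complex.exp (2 * Real.pi * Complex.I * ((f x + ν * x : ℝ) : ℂ))
    with hE_def
  set F : ℝ → ℂ := fun x => Complex.I * E a - Complex.I * E x with hF_def
  set G : ℝ → ℂ := fun x => ((2 * Real.pi * (f' x + ν) : ℝ) : ℂ) * E x with hG_def
  have hEnorm : ∀ x, ‖E x‖ = 1 := by
    intro x
    show ‖Complex.exp (2 * Real.pi * Complex.I * ((f x + ν * x : ℝ) : ℂ))‖ = 1
    have : (2 * Real.pi * Complex.I * ((f x + ν * x : ℝ) : ℂ))
        = ((2 * Real.pi * (f x + ν * x) : ℝ) : ℂ) * Complex.I := by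
      push_cast; ring
    rw [this, Complex.norm_exp_ofReal_mul_I]
  -- derivative of F is G
  have hFderiv : ∀ x ∈ Set.Icc a b, HasDerivAt F (G x) x := by
    intro x hx
    have hg : HasDerivAt (fun y => f y + (ν:ℝ) * y) (f' x + ν) x := by
      have hid : HasDerivAt (fun y : ℝ => (ν:ℝ) * y) (ν:ℝ) x := by
        simpa using (hasDerivAt_id x).const_mul (ν:ℝ)
      exact (hderiv x hx).add hid
    have hgC : HasDerivAt (fun y => ((f y + ν * y : ℝ) : ℂ)) ((f' x + ν : ℝ) : ℂ) x :=
      hg.ofReal_comp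
    have hphase : HasDerivAt (fun y => 2 * Real.pi * Complex.I * ((f y + ν * y : ℝ) : ℂ))
        (2 * Real.pi * Complex.I * ((f' x + ν : ℝ) : ℂ)) x := hgC.const_mul _
    have hE' : HasDerivAt E (E x * (2 * Real.pi * Complex.I * ((f' x + ν : ℝ) : ℂ))) x := by
      have := hphase.cexp
      simpa [hE_def, mul_comm] using this
    have : HasDerivAt F (0 - Complex.I * (E x * (2 * Real.pi * Complex.I * ((f' x + ν : ℝ) : ℂ)))) x :=
      (hasDerivAt_const x _).sub ((hE'.const_mul Complex.I))
    convert this using 1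
    rw [hG_def]
    have hI : Complex.I * Complex.I = -1 := Complex.I_mul_I
    push_cast
    ring_nf
    rw [Complex.I_sq]
    ring
  -- apply the Abel bound with M = 2
  have habel := abel_bound a b hab.le w 2
    (by -- continuity of w
      apply hcont.div
      · exact (continuousOn_const.mul (hcont.add continuousOn_const))
      · intro x hx; exact (hden x hx).ne')
    (by -- antitonicity of w
      intro x hx y hy hxy
      have hfx := hpos x hx
      have hfy := hpos y hy
      have hle : f' y ≤ f' x := hanti hx hy hxy
      rw [hw_def]
      rw [div_le_div_iff₀ (hden y hy) (hden x hx)]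
      nlinarith [mul_le_mul_of_nonneg_left hle
        (by positivity : (0:ℝ) ≤ 2 * Real.pi * (ν:ℝ)), mul_pos hfy hfx, hπ])
    (by -- nonnegativity at b
      have := hpos b hb
      positivity)
    F G hFderiv
    (by -- continuity of G
      apply ContinuousOn.mul
      · exact Complex.continuous_ofReal.comp_continuousOn
          (continuousOn_const.mul (hcont.add continuousOn_const))
      · rw [hE_def]
        apply Complex.continuous_exp.comp_continuousOn
        apply continuousOn_const.mul
        apply Complex.continuous_ofReal.comp_continuousOn
        apply ContinuousOn.add
        · exact fun x hx => ((hderiv x hx).continuousAt.continuousWithinAt)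
        · exact continuousOn_const.mul (continuousOn_id' _))
    (by rw [hF_def]; simp)
    (by -- norm bound 2
      intro x hx
      rw [hF_def]
      calc ‖Complex.I * E a - Complex.I * E x‖
          ≤ ‖Complex.I * E a‖ + ‖Complex.I * E x‖ := norm_sub_le _ _
        _ = 2 := by rw [norm_mul, norm_mul, Complex.norm_I, hEnorm, hEnorm]; ring)
  -- identify the integrand
  have hinteq : (∫ x in a..b, (f' x : ℂ) *
      Complex.exp (2 * Real.pi * Complex.I * ((f x + ν * x : ℝ) : ℂ)))
      = ∫ x in a..b, w x • G x := by
    apply intervalIntegral.integral_congr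
    intro x hx
    rw [Set.uIcc_of_le hab.le] at hx
    show (f' x : ℂ) * Complex.exp (2 * Real.pi * Complex.I * ((f x + ν * x : ℝ) : ℂ))
      = w x • G x
    rw [hw_def, hG_def]
    show _ = (f' x / (2 * Real.pi * (f' x + ν))) • (((2 * Real.pi * (f' x + ν) : ℝ) : ℂ) * E x)
    rw [Complex.real_smul, ← mul_assoc, ← Complex.ofReal_mul,
      div_mul_cancel₀ _ (hden x hx).ne']
  rw [hinteq]
  have : 2 * w a = f' a / (Real.pi * (f' a + ν)) := by
    rw [hw_def]
    have h1 : (0:ℝ) < f' a + ν := by have := hpos a ha; positivity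
    field_simp
  calc ‖∫ x in a..b, w x • G x‖ ≤ 2 * w a := habel
    _ = f' a / (Real.pi * (f' a + ν)) := this
end

section
/- Let f : [a,b] → ℝ have a continuous, positive, decreasing derivative f', and let ν be an integer with ν > f'(a). Then |∫_a^b f'(x) e^{2πi(f(x)−νx)} dx| ≤ f'(a)/(π(ν − f'(a))). -/
open MeasureTheory Set

/-- Abel-summation / layer-cake bound: if `h` is a nonnegative antitone weight on `[a,b]`
and all partial integrals of `g` from `a` are bounded by `M`, then
`‖∫ h·g‖ ≤ M * h a`. -/
lemma abel_weight_bound (a b M : ℝ) (hab : a ≤ b) (h : ℝ → ℝ) (hmeas : Measurable h)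
    (hanti : AntitoneOn h (Set.Icc a b)) (h0 : ∀ x ∈ Set.Icc a b, 0 ≤ h x)
    (g : ℝ → ℂ) (hg : IntervalIntegrable g volume a b)
    (hM : ∀ c ∈ Set.Icc a b, ‖∫ x in a..c, g x‖ ≤ M) :
    ‖∫ x in a..b, (h x : ℂ) * g x‖ ≤ M * h a := by
  have ha0 : 0 ≤ h a := h0 a ⟨le_refl a, hab⟩
  have hM0 : 0 ≤ M := by simpa using hM a ⟨le_refl a, hab⟩
  rw [intervalIntegral.integral_of_le hab]
  have key : ∀ x ∈ Set.Ioc a b,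
      (h x : ℂ) * g x = ∫ t in Set.Ioc 0 (h a), if t < h x then g x else 0 := by
    intro x hx
    have hx' : x ∈ Set.Icc a b := ⟨le_of_lt hx.1, hx.2⟩
    have h1 : 0 ≤ h x := h0 x hx'
    have h2 : h x ≤ h a := hanti ⟨le_refl a, hab⟩ hx' hx'.1
    have hind : (fun t => if t < h x then g x else 0)
        = Set.indicator (Set.Iio (h x)) (fun _ => g x) := by
      funext t; simp [Set.indicator_apply, Set.mem_Iio]
    rw [hind, MeasureTheory.setIntegral_indicator measurableSet_Iio]
    have hset : Set.Ioc 0 (h a) ∩ Set.Iio (h x) = Set.Ioo 0 (h x) := by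
      ext t
      constructor
      · rintro ⟨⟨ht0, _⟩, ht2⟩; exact ⟨ht0, ht2⟩
      · rintro ⟨ht0, ht1⟩; exact ⟨⟨ht0, le_trans (le_of_lt ht1) h2⟩, ht1⟩
    rw [hset, MeasureTheory.setIntegral_const, Real.volume_real_Ioo_of_le (by linarith),
      Complex.real_smul, sub_zero]
  rw [MeasureTheory.setIntegral_congr_fun measurableSet_Ioc key]
  have hgint : MeasureTheory.IntegrableOn g (Set.Ioc a b) := hg.1
  have hE : MeasurableSet {p : ℝ × ℝ | p.2 < h p.1} :=
    measurableSet_lt measurable_snd (hmeas.comp measurable_fst)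
  have hbase : MeasureTheory.Integrable (fun p : ℝ × ℝ => g p.1)
      ((volume.restrict (Set.Ioc a b)).prod (volume.restrict (Set.Ioc 0 (h a)))) := by
    simpa using MeasureTheory.Integrable.mul_prod hgint
      (integrable_const (1 : ℂ) (μ := volume.restrict (Set.Ioc 0 (h a))))
  have hindeq : (fun p : ℝ × ℝ => if p.2 < h p.1 then g p.1 else 0)
      = Set.indicator {p : ℝ × ℝ | p.2 < h p.1} (fun p => g p.1) := by
    funext p; simp [Set.indicator_apply]
  have hprod : MeasureTheory.Integrable
      (Function.uncurry fun x t => if t < h x then g x else 0)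
      ((volume.restrict (Set.Ioc a b)).prod (volume.restrict (Set.Ioc 0 (h a)))) := by
    have : Function.uncurry (fun x t => if t < h x then g x else (0 : ℂ))
        = fun p : ℝ × ℝ => if p.2 < h p.1 then g p.1 else 0 := rfl
    rw [this, hindeq]
    exact hbase.indicator hE
  rw [MeasureTheory.integral_integral_swap hprod]
  have hbound : ∀ t ∈ Set.Ioc 0 (h a),
      ‖∫ x in Set.Ioc a b, if t < h x then g x else 0‖ ≤ M := by
    intro t _
    have hSmeas : MeasurableSet {x : ℝ | t < h x} := measurableSet_lt measurable_const hmeas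
    have hind : (fun x => if t < h x then g x else 0)
        = Set.indicator {x : ℝ | t < h x} g := by
      funext x; simp [Set.indicator_apply]
    rw [hind, MeasureTheory.setIntegral_indicator hSmeas]
    set S : Set ℝ := Set.Ioc a b ∩ {x : ℝ | t < h x} with hSdef
    by_cases hne : S.Nonempty
    · obtain ⟨x₀, hx₀⟩ := hne
      set c := sSup S with hc
      have hbdd : BddAbove S := ⟨b, fun y hy => hy.1.2⟩
      have hcb : c ≤ b := csSup_le ⟨x₀, hx₀⟩ (fun y hy => hy.1.2)
      have hac : a ≤ c := le_trans (le_of_lt hx₀.1.1) (le_csSup hbdd hx₀)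
      have hsub1 : Set.Ioo a c ⊆ S := by
        intro y hy
        obtain ⟨z, hz, hyz⟩ := exists_lt_of_lt_csSup ⟨x₀, hx₀⟩ hy.2
        have hyI : y ∈ Set.Icc a b := ⟨le_of_lt hy.1, le_trans (le_of_lt hyz) hz.1.2⟩
        have hzI : z ∈ Set.Icc a b := ⟨le_of_lt hz.1.1, hz.1.2⟩
        exact ⟨⟨hy.1, hyI.2⟩, lt_of_lt_of_le hz.2 (hanti hyI hzI (le_of_lt hyz))⟩
      have hsub2 : S ⊆ Set.Ioc a c := fun y hy => ⟨hy.1.1, le_csSup hbdd hy⟩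
      have haeeq : S =ᵐ[volume] Set.Ioc a c := by
        rw [MeasureTheory.ae_eq_set]
        constructor
        · have : S \ Set.Ioc a c = ∅ := Set.diff_eq_empty.2 hsub2
          simp [this]
        · refine measure_mono_null (fun y hy => ?_) (Real.volume_singleton (a := c))
          rcases lt_or_eq_of_le hy.1.2 with hlt | heq
          · exact absurd (hsub1 ⟨hy.1.1, hlt⟩) hy.2
          · exact heq
      rw [MeasureTheory.setIntegral_congr_set haeeq, ← intervalIntegral.integral_of_le hac]
      exact hM c ⟨hac, hcb⟩
    · rw [Set.not_nonempty_iff_eq_empty] at hne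
      rw [hne]
      simpa using hM0
  calc ‖∫ t in Set.Ioc 0 (h a), ∫ x in Set.Ioc a b, if t < h x then g x else 0‖
      ≤ M * (volume (Set.Ioc 0 (h a))).toReal :=
        MeasureTheory.norm_setIntegral_le_of_norm_le_const measure_Ioc_lt_top
          hbound
    _ = M * h a := by rw [Real.volume_Ioc, ENNReal.toReal_ofReal (by linarith)]; ring_nf

theorem weighted_exponential_integral_minus (a b : ℝ) (hab : a < b) (f f' : ℝ → ℝ)
    (hderiv : ∀ x ∈ Set.Icc a b, HasDerivAt f (f' x) x)
    (hcont : ContinuousOn f' (Set.Icc a b))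
    (hpos : ∀ x ∈ Set.Icc a b, 0 < f' x)
    (hanti : StrictAntiOn f' (Set.Icc a b))
    (ν : ℤ) (hν : f' a < ν) :
    ‖∫ x in a..b, (f' x : ℂ) *
        Complex.exp (2 * Real.pi * Complex.I * ((f x - ν * x : ℝ) : ℂ))‖ ≤
      f' a / (Real.pi * (ν - f' a)) := by
  have hab' : a ≤ b := le_of_lt hab
  have haI : a ∈ Set.Icc a b := ⟨le_refl a, hab'⟩
  have hπ : (0:ℝ) < Real.pi := Real.pi_pos
  have hfa : 0 < f' a := hpos a haI
  have hν0 : (0:ℝ) < ν := lt_trans hfa hν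
  have hle : ∀ x ∈ Set.Icc a b, f' x ≤ f' a := by
    intro x hx
    rcases eq_or_lt_of_le hx.1 with heq | hlt
    · rw [← heq]
    · exact le_of_lt (hanti haI hx hlt)
  have hflt : ∀ x ∈ Set.Icc a b, f' x < ν := fun x hx => lt_of_le_of_lt (hle x hx) hν
  have hdpos : ∀ x ∈ Set.Icc a b, 0 < 2 * Real.pi * ((ν:ℝ) - f' x) := by
    intro x hx
    have h1 := hflt x hx
    have h2 : (0:ℝ) < (ν:ℝ) - f' x := by linarith
    positivity
  -- clamp to [a,b]
  set cl : ℝ → ℝ := fun x => max a (min b x) with hcldef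
  have hclmem : ∀ x, cl x ∈ Set.Icc a b := by
    intro x
    constructor
    · exact le_max_left _ _
    · exact max_le hab' (min_le_left _ _)
  have hcleq : ∀ x ∈ Set.Icc a b, cl x = x := by
    intro x hx
    simp only [hcldef]
    rw [min_eq_right hx.2, max_eq_right hx.1]
  have hclcont : Continuous cl := continuous_const.max (continuous_const.min continuous_id)
  have hF'cont : Continuous (fun x => f' (cl x)) :=
    hcont.comp_continuous hclcont hclmem
  set h : ℝ → ℝ := fun x => f' (cl x) / (2 * Real.pi * ((ν:ℝ) - f' (cl x))) with hhdef
  have hheq : ∀ x ∈ Set.Icc a b, h x = f' x / (2 * Real.pi * ((ν:ℝ) - f' x)) := by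
    intro x hx; simp only [hhdef, hcleq x hx]
  set g : ℝ → ℂ := fun x => ((2 * Real.pi * ((ν:ℝ) - f' x) : ℝ) : ℂ) *
    Complex.exp (2 * Real.pi * Complex.I * ((f x - ν * x : ℝ) : ℂ)) with hgdef
  have hmeas : Measurable h := by
    apply Measurable.div hF'cont.measurable
    exact (measurable_const.sub hF'cont.measurable).const_mul _
  have hanti' : AntitoneOn h (Set.Icc a b) := by
    intro x hx y hy hxy
    rw [hheq x hx, hheq y hy]
    have h1 : 0 < f' y := hpos y hy
    have h2 : f' y ≤ f' x := by
      rcases eq_or_lt_of_le hxy with heq | hlt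
      · rw [heq]
      · exact le_of_lt (hanti hx hy hlt)
    have h3 : f' x < ν := hflt x hx
    have h4 : f' y < ν := hflt y hy
    rw [div_le_div_iff₀ (by nlinarith) (by nlinarith)]
    nlinarith [mul_nonneg (mul_nonneg hπ.le (sub_nonneg.2 h2)) hν0.le]
  have h0 : ∀ x ∈ Set.Icc a b, 0 ≤ h x := by
    intro x hx
    rw [hheq x hx]
    have h1 := hpos x hx
    have h2 := hflt x hx
    have h3 : (0:ℝ) < (ν:ℝ) - f' x := by linarith
    positivity
  have hfc : ContinuousOn f (Set.Icc a b) :=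
    fun x hx => (hderiv x hx).continuousAt.continuousWithinAt
  have hgc : ContinuousOn g (Set.Icc a b) := by
    apply ContinuousOn.mul
    · exact Complex.continuous_ofReal.comp_continuousOn
        (ContinuousOn.mul continuousOn_const (continuousOn_const.sub hcont))
    · exact Complex.continuous_exp.comp_continuousOn
        (continuousOn_const.mul (Complex.continuous_ofReal.comp_continuousOn
          ((hfc.sub (continuousOn_const.mul continuousOn_id)))))
  have hgint : IntervalIntegrable g volume a b :=
    (hgc.mono (by rw [Set.uIcc_of_le hab'])).intervalIntegrable
  -- antiderivative
  set G : ℝ → ℂ := fun x => Complex.I *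
    Complex.exp (2 * Real.pi * Complex.I * ((f x - ν * x : ℝ) : ℂ)) with hGdef
  have hG : ∀ x ∈ Set.Icc a b, HasDerivAt G (g x) x := by
    intro x hx
    have h1 : HasDerivAt (fun y => f y - (ν:ℝ) * y) (f' x - (ν:ℝ) * 1) x :=
      (hderiv x hx).sub (HasDerivAt.const_mul ((ν:ℝ)) (hasDerivAt_id x))
    have h2 : HasDerivAt (fun y => ((f y - (ν:ℝ) * y : ℝ) : ℂ))
        ((f' x - (ν:ℝ) * 1 : ℝ) : ℂ) x := h1.ofReal_comp
    have h3 := (h2.const_mul (2 * (Real.pi:ℂ) * Complex.I)).cexp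
    have h4 := h3.const_mul Complex.I
    have heq2 : g x = Complex.I *
        (Complex.exp (2 * (Real.pi:ℂ) * Complex.I * ((f x - (ν:ℝ) * x : ℝ) : ℂ)) *
          (2 * (Real.pi:ℂ) * Complex.I * ((f' x - (ν:ℝ) * 1 : ℝ) : ℂ))) := by
      simp only [hgdef]
      push_cast
      linear_combination (2 * (Real.pi:ℂ) * ((ν:ℂ) - (f' x : ℂ)) *
        Complex.exp (2 * (Real.pi:ℂ) * Complex.I * ((f x : ℂ) - (ν:ℂ) * (x:ℂ)))) *
        Complex.I_sq
    rw [heq2]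
    exact h4
  have hM : ∀ c ∈ Set.Icc a b, ‖∫ x in a..c, g x‖ ≤ 2 := by
    intro c hc
    have hsub : Set.uIcc a c ⊆ Set.Icc a b := by
      rw [Set.uIcc_of_le hc.1]
      exact Set.Icc_subset_Icc (le_refl a) hc.2
    have hgint' : IntervalIntegrable g volume a c :=
      (hgc.mono hsub).intervalIntegrable
    rw [intervalIntegral.integral_eq_sub_of_hasDerivAt
        (fun x hxc => hG x (hsub hxc)) hgint']
    have hnorm : ∀ y : ℝ, ‖G y‖ = 1 := by
      intro y
      simp only [hGdef]
      rw [norm_mul, Complex.norm_I,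
        Complex.norm_exp, one_mul]
      have : (2 * (Real.pi:ℂ) * Complex.I * ((f y - (ν:ℝ) * y : ℝ) : ℂ)).re = 0 := by
        simp [Complex.mul_re, Complex.mul_im]
      rw [this, Real.exp_zero]
    calc ‖G c - G a‖ ≤ ‖G c‖ + ‖G a‖ := norm_sub_le _ _
      _ = 2 := by rw [hnorm, hnorm]; norm_num
  -- apply the key lemma
  have hmain := abel_weight_bound a b 2 hab' h hmeas hanti' h0 g hgint hM
  have heqint : (∫ x in a..b, (f' x : ℂ) *
      Complex.exp (2 * Real.pi * Complex.I * ((f x - ν * x : ℝ) : ℂ)))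
      = ∫ x in a..b, (h x : ℂ) * g x := by
    apply intervalIntegral.integral_congr
    intro x hx
    rw [Set.uIcc_of_le hab'] at hx
    simp only [hgdef]
    rw [hheq x hx]
    have h1 := hpos x hx
    have h2 := hflt x hx
    have h3 : (0:ℝ) < (ν:ℝ) - f' x := by linarith
    have h4 : (2 * Real.pi * ((ν:ℝ) - f' x) : ℝ) ≠ 0 := by positivity
    have hC : ((2 * Real.pi * ((ν:ℝ) - f' x) : ℝ) : ℂ) ≠ 0 := Complex.ofReal_ne_zero.2 h4
    rw [Complex.ofReal_div, div_mul_eq_mul_div, mul_div_assoc,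
      mul_div_cancel_left₀ _ hC]
  rw [heqint]
  refine le_trans hmain (le_of_eq ?_)
  have hha : h a = f' a / (2 * Real.pi * ((ν:ℝ) - f' a)) := hheq a haI
  rw [hha]
  have h3 : (0:ℝ) < (ν:ℝ) - f' a := by linarith
  field_simp
end
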